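/- (Theorem 3.2, detailed balance) Suppose the arrays satisfy the symmetry conditions: (3.7) λ_i(n_i−1;j)/μ_i(n_i;j) · β_{ik}(n_i,n_k;j) = λ_k(n_k;j)/μ_k(n_k+1;j) · β_{ki}(n_k+1,n_i−1;j) for all i ≠ k, j ∈ Λ and n_i ≥ 1; (3.8) λ_j(n_j−1;j)/μ_j(n_j;j) · θ_{jk}(n_j,n_k) = λ_k(n_k;j)/μ_k(n_k+1;j) · θ_{kj}(n_k+1,n_j−1) for all k ≠ j and n_j ≥ 1; (3.9) τ_{ik}(n) · ∏_{q∈Λ} λ̄_q(n_q;i)/μ̄_q(n_q;i) = τ_{ki}(n) · ∏_{q∈Λ} λ̄_q(n_q;k)/μ̄_q(n_q;k) for all i ≠ k and all n : Λ → ℕ. Then the weight w(j,n) = ∏_{q∈Λ} [λ̄_q(n_q;j)/μ̄_q(n_q;j)] · γ̄_j(n_j) satisfies the detailed balance equations: for all j ∈ Λ and n : Λ → ℕ, (i) w(j,n)·λ_k(n_k;j) = w(j, n+e^k)·μ_k(n_k+1;j) for all k ≠ j, and w(j,n)·λ_j(n_j;j)γ_j(n_j) = w(j, n+e^j)·μ_j(n_j+1;j);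 (ii) w(j,n)·β_{kl}(n_k,n_l;j) = w(j, n+e^{k→l})·β_{lk}(n_l+1,n_k−1;j) for k ≠ j, l ≠ j, k ≠ l, n_k ≥ 1; (iii) w(j,n)·θ_{jk}(n_j,n_k) = w(j, n+e^{j→k})·θ_{kj}(n_k+1,n_j−1)·γ_j(n_j−1) for k ≠ j, n_j ≥ 1; (iv) w(j,n)·γ̄_j(n_j)^{−1}·τ_{jj'}(n) = w(j',n)·γ̄_{j'}(n_{j'})^{−1}·τ_{j'j}(n) for j' ≠ j. -/

import Mathlib

/-- The `e^k` configuration increment: `n + e^k`. -/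
def bump {Λ : Type*} [DecidableEq Λ] (n : Λ → ℕ) (k : Λ) : Λ → ℕ :=
  fun l => n l + (if l = k then 1 else 0)

/-- The jump move `n + e^{i→k} = n - e^i + e^k`. -/
def move {Λ : Type*} [DecidableEq Λ] (n : Λ → ℕ) (i k : Λ) : Λ → ℕ :=
  fun l => n l - (if l = i then 1 else 0) + (if l = k then 1 else 0)

/-- Theorem 3.2, detailed balance: under the symmetry conditions
(3.7)-(3.9), the weights `w(j,n) = ∏_q [λ̄_q(n_q;j)/μ̄_q(n_q;j)] · γ̄_j(n_j)`
satisfy the detailed balance equations. -/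
theorem general_rw_jackson_detailed_balance
    (Λ : Type*) [Fintype Λ] [DecidableEq Λ] [Nonempty Λ]
    (lam mu : Λ → ℕ → Λ → ℝ) (gam : Λ → ℕ → ℝ)
    (hlam : ∀ i m j, 0 ≤ lam i m j) (hmu : ∀ i m j, 0 < mu i m j)
    (hgam : ∀ i m, 0 < gam i m) (hgam0 : ∀ i, gam i 0 = 1)
    (lamBar muBar : Λ → ℕ → Λ → ℝ) (gamBar : Λ → ℕ → ℝ)
    (hlamBar : ∀ i m j, lamBar i m j = ∏ u ∈ Finset.range m, lam i u j)
    (hmuBar : ∀ i m j, muBar i m j = ∏ u ∈ Finset.range m, mu i (u + 1) j)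
    (hgamBar : ∀ i m, gamBar i m = ∏ u ∈ Finset.range m, gam i u)
    (β : Λ → Λ → ℕ → ℕ → Λ → ℝ) (θ : Λ → Λ → ℕ → ℕ → ℝ) (τ : Λ → Λ → (Λ → ℕ) → ℝ)
    (hβnn : ∀ i k a b j, 0 ≤ β i k a b j) (hθnn : ∀ i k a b, 0 ≤ θ i k a b)
    (hτnn : ∀ i k n, 0 ≤ τ i k n)
    -- symmetry condition (3.7)
    (h37 : ∀ (i k j : Λ) (a b : ℕ), i ≠ k → 1 ≤ a →
      lam i (a - 1) j / mu i a j * β i k a b j =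
        lam k b j / mu k (b + 1) j * β k i (b + 1) (a - 1) j)
    -- symmetry condition (3.8)
    (h38 : ∀ (j k : Λ) (a b : ℕ), k ≠ j → 1 ≤ a →
      lam j (a - 1) j / mu j a j * θ j k a b =
        lam k b j / mu k (b + 1) j * θ k j (b + 1) (a - 1))
    -- symmetry condition (3.9)
    (h39 : ∀ (i k : Λ), i ≠ k → ∀ n : Λ → ℕ,
      τ i k n * ∏ q, lamBar q (n q) i / muBar q (n q) i =
        τ k i n * ∏ q, lamBar q (n q) k / muBar q (n q) k)
    (w : Λ → (Λ → ℕ) → ℝ)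
    (hw : ∀ (j : Λ) (n : Λ → ℕ),
      w j n = (∏ q, lamBar q (n q) j / muBar q (n q) j) * gamBar j (n j)) :
    ∀ (j : Λ) (n : Λ → ℕ),
      -- (i) arrival at an unloaded site paired with exit
      (∀ k, k ≠ j → w j n * lam k (n k) j = w j (bump n k) * mu k (n k + 1) j) ∧
      -- (i') arrival at the loaded site paired with exit
      (w j n * (lam j (n j) j * gam j (n j)) = w j (bump n j) * mu j (n j + 1) j) ∧
      -- (ii) task jump between unloaded sites
      (∀ k l, k ≠ j → l ≠ j → k ≠ l → 1 ≤ n k →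
        w j n * β k l (n k) (n l) j =
          w j (move n k l) * β l k (n l + 1) (n k - 1) j) ∧
      -- (iii) task jump from the loaded site
      (∀ k, k ≠ j → 1 ≤ n j →
        w j n * θ j k (n j) (n k) =
          w j (move n j k) * (θ k j (n k + 1) (n j - 1) * gam j (n j - 1))) ∧
      -- (iv) leap of the distinguished customer
      (∀ j', j' ≠ j →
        w j n * (gamBar j (n j))⁻¹ * τ j j' n =
          w j' n * (gamBar j' (n j'))⁻¹ * τ j' j n) := by

  intro j n
  have hmuBarpos : ∀ i m j', (0:ℝ) < muBar i m j' := by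
    intro i m j'
    rw [hmuBar]
    exact Finset.prod_pos fun u _ => hmu i (u + 1) j'
  have hgamBarpos : ∀ i m, (0:ℝ) < gamBar i m := by
    intro i m
    rw [hgamBar]
    exact Finset.prod_pos fun u _ => hgam i u
  set r : Λ → ℕ → ℝ := fun q m => lamBar q m j / muBar q m j with hr
  have rstep : ∀ q m, r q (m + 1) = r q m * (lam q m j / mu q (m + 1) j) := by
    intro q m
    simp only [hr, hlamBar, hmuBar, Finset.prod_range_succ]
    rw [div_mul_div_comm]
  have gstep : ∀ i m, gamBar i (m + 1) = gamBar i m * gam i m := by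
    intro i m
    simp only [hgamBar, Finset.prod_range_succ]
  have split1 : ∀ (f : Λ → ℝ) (k : Λ),
      ∏ q, f q = f k * ∏ q ∈ Finset.univ.erase k, f q := by
    intro f k
    exact (Finset.mul_prod_erase _ _ (Finset.mem_univ k)).symm
  have split2 : ∀ (f : Λ → ℝ) (k l : Λ), k ≠ l →
      ∏ q, f q = f k * (f l * ∏ q ∈ (Finset.univ.erase k).erase l, f q) := by
    intro f k l hkl
    rw [← Finset.mul_prod_erase _ _ (Finset.mem_univ k),
      ← Finset.mul_prod_erase _ f
        (Finset.mem_erase.mpr ⟨hkl.symm, Finset.mem_univ l⟩)]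
  refine ⟨?_, ?_, ?_, ?_, ?_⟩
  · -- (i)
    intro k hkj
    have hbj : bump n k j = n j := by simp [bump, hkj.symm]
    have hbk : bump n k k = n k + 1 := by simp [bump]
    have hP : ∏ q ∈ Finset.univ.erase k, r q (bump n k q)
        = ∏ q ∈ Finset.univ.erase k, r q (n q) := by
      refine Finset.prod_congr rfl fun q hq => ?_
      have : q ≠ k := (Finset.mem_erase.mp hq).1
      simp [bump, this]
    rw [hw j n, hw j (bump n k), hbj, split1 (fun q => r q (n q)) k,
      split1 (fun q => r q (bump n k q)) k]
    simp only [hbk, hP, rstep]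
    have hc : lam k (n k) j / mu k (n k + 1) j * mu k (n k + 1) j = lam k (n k) j :=
      div_mul_cancel₀ _ (hmu k (n k + 1) j).ne'
    set P := ∏ q ∈ Finset.univ.erase k, r q (n q)
    linear_combination (-(r k (n k) * P * gamBar j (n j))) * hc
  · -- (i')
    have hbj : bump n j j = n j + 1 := by simp [bump]
    have hP : ∏ q ∈ Finset.univ.erase j, r q (bump n j q)
        = ∏ q ∈ Finset.univ.erase j, r q (n q) := by
      refine Finset.prod_congr rfl fun q hq => ?_
      have : q ≠ j := (Finset.mem_erase.mp hq).1
      simp [bump, this]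
    rw [hw j n, hw j (bump n j), hbj, split1 (fun q => r q (n q)) j,
      split1 (fun q => r q (bump n j q)) j]
    simp only [hbj, hP, rstep, gstep]
    have hc : lam j (n j) j / mu j (n j + 1) j * mu j (n j + 1) j = lam j (n j) j :=
      div_mul_cancel₀ _ (hmu j (n j + 1) j).ne'
    set P := ∏ q ∈ Finset.univ.erase j, r q (n q)
    linear_combination (-(r j (n j) * P * gamBar j (n j) * gam j (n j))) * hc
  · -- (ii)
    intro k l hkj hlj hkl hnk
    obtain ⟨m, hm⟩ : ∃ m, n k = m + 1 := ⟨n k - 1, (Nat.succ_pred_eq_of_pos hnk).symm⟩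
    have hmj : move n k l j = n j := by simp [move, hkj.symm, hlj.symm]
    have hmk : move n k l k = m := by simp [move, hkl, hm]
    have hml : move n k l l = n l + 1 := by simp [move, hkl.symm]
    have hP : ∏ q ∈ (Finset.univ.erase k).erase l, r q (move n k l q)
        = ∏ q ∈ (Finset.univ.erase k).erase l, r q (n q) := by
      refine Finset.prod_congr rfl fun q hq => ?_
      obtain ⟨hql, hqk⟩ := Finset.mem_erase.mp hq
      have hqk' : q ≠ k := (Finset.mem_erase.mp hqk).1
      simp [move, hql, hqk']
    rw [hw j n, hw j (move n k l), hmj, split2 (fun q => r q (n q)) k l hkl,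
      split2 (fun q => r q (move n k l q)) k l hkl]
    simp only [hmk, hml, hP, hm, rstep, Nat.add_sub_cancel]
    set P := ∏ q ∈ (Finset.univ.erase k).erase l, r q (n q)
    have h := h37 k l j (m + 1) (n l) hkl (Nat.le_add_left 1 m)
    simp only [Nat.add_sub_cancel] at h
    linear_combination (r k m * r l (n l) * P * gamBar j (n j)) * h
  · -- (iii)
    intro k hkj hnj
    obtain ⟨m, hm⟩ : ∃ m, n j = m + 1 := ⟨n j - 1, (Nat.succ_pred_eq_of_pos hnj).symm⟩
    have hjk : j ≠ k := hkj.symm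
    have hmj : move n j k j = m := by simp [move, hjk, hm]
    have hmk : move n j k k = n k + 1 := by simp [move, hkj]
    have hP : ∏ q ∈ (Finset.univ.erase j).erase k, r q (move n j k q)
        = ∏ q ∈ (Finset.univ.erase j).erase k, r q (n q) := by
      refine Finset.prod_congr rfl fun q hq => ?_
      obtain ⟨hqk, hqj⟩ := Finset.mem_erase.mp hq
      have hqj' : q ≠ j := (Finset.mem_erase.mp hqj).1
      simp [move, hqk, hqj']
    rw [hw j n, hw j (move n j k), hmj, split2 (fun q => r q (n q)) j k hjk,
      split2 (fun q => r q (move n j k q)) j k hjk]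
    simp only [hmj, hmk, hP, hm, rstep, gstep, Nat.add_sub_cancel]
    set P := ∏ q ∈ (Finset.univ.erase j).erase k, r q (n q)
    have h := h38 j k (m + 1) (n k) hkj (Nat.le_add_left 1 m)
    simp only [Nat.add_sub_cancel] at h
    linear_combination (r j m * r k (n k) * P * gamBar j m * gam j m) * h
  · -- (iv)
    intro j' hj'
    have key : ∀ j0, w j0 n * (gamBar j0 (n j0))⁻¹
        = ∏ q, lamBar q (n q) j0 / muBar q (n q) j0 := by
      intro j0
      rw [hw j0 n, mul_assoc, mul_inv_cancel₀ (hgamBarpos j0 (n j0)).ne', mul_one]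
    have h := h39 j j' hj'.symm n
    rw [← key j, ← key j'] at h
    linear_combination h
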